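/- Let X be a compact Hausdorff space and μ a finite complete regular Borel measure with supp(μ) = X. If f : X → ℝ is μ-Riemann integrable and has no generalized jump discontinuity, then there exists a unique continuous function f_r : X → ℝ that agrees with f on the set of continuity points of f. -/

import Mathlib

open MeasureTheory Set Filter Topology

/-- `f` has a generalized jump discontinuity. -/
def HasGJD {X : Type*} [TopologicalSpace X] (f : X → ℝ) : Prop :=
  ∃ (x : X) (O₁ O₂ : Set X), IsOpen O₁ ∧ IsOpen O₂ ∧
    x ∈ closure O₁ ∩ closure O₂ ∧ closure (f '' O₁) ∩ closure (f '' O₂) = ∅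

/-- Let `X` be compact Hausdorff and `μ` a finite complete regular Borel measure with full
support. If `f : X → ℝ` is `μ`-Riemann integrable (bounded with `μ`-null set of
discontinuities) and has no generalized jump discontinuity, then there is a unique continuous
`f_r : X → ℝ` that agrees with `f` at every continuity point of `f`. -/
theorem regularization_exists_unique {X : Type*} [TopologicalSpace X] [CompactSpace X]
    [T2Space X] [MeasurableSpace X] [BorelSpace X]
    (μ : Measure X) [IsFiniteMeasure μ] (hcomplete : μ.IsComplete)
    (hreg : ∀ A : Set X, MeasurableSet A → ∀ ε > (0 : ℝ),
      ∃ F G : Set X, IsClosed F ∧ IsOpen G ∧ F ⊆ A ∧ A ⊆ G ∧ (μ (G \ F)).toReal < ε)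
    (hsupp : ∀ U : Set X, IsOpen U → U.Nonempty → 0 < μ U)
    (f : X → ℝ) (hfb : ∃ C, ∀ x, |f x| ≤ C)
    (hnull : μ {x | ¬ ContinuousAt f x} = 0)
    (hnogjd : ¬ HasGJD f) :
    ∃! fr : C(X, ℝ), ∀ x, ContinuousAt f x → fr x = f x := by
  obtain ⟨C0, hC0⟩ := hfb
  set Cs : Set X := {x | ContinuousAt f x} with hCs
  -- continuity points are dense
  have hdense : Dense Cs := by
    intro x
    rw [mem_closure_iff]
    intro U hU hxU
    by_contra h
    have hsub : U ⊆ {x | ¬ ContinuousAt f x} := fun y hy hyc => h ⟨y, hy, hyc⟩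
    have := (measure_mono hsub).trans_eq hnull
    exact absurd (hsupp U hU ⟨x, hxU⟩) (by simp [le_antisymm this zero_le])
  have hNB : ∀ x : X, (𝓝 x ⊓ Filter.principal Cs).NeBot := fun x =>
    mem_closure_iff_clusterPt.1 (hdense x)
  -- no two distinct cluster values of f along the trace filter on Cs
  have key : ∀ (x : X) (r₁ r₂ : ℝ), r₁ < r₂ →
      MapClusterPt r₁ (𝓝 x ⊓ Filter.principal Cs) f →
      MapClusterPt r₂ (𝓝 x ⊓ Filter.principal Cs) f → False := by
    intro x r₁ r₂ hlt h₁ h₂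
    set m : ℝ := (r₁ + r₂) / 2 with hm
    set δ : ℝ := (r₂ - r₁) / 4 with hd
    have hδ : 0 < δ := by rw [hd]; linarith
    set O₁ : Set X := interior {z | f z < m - δ}
    set O₂ : Set X := interior {z | m + δ < f z}
    apply hnogjd
    refine ⟨x, O₁, O₂, isOpen_interior, isOpen_interior, ⟨?_, ?_⟩, ?_⟩
    · -- x ∈ closure O₁
      rw [mem_closure_iff]
      intro U hU hxU
      have himg : f '' (U ∩ Cs) ∈ Filter.map f (𝓝 x ⊓ Filter.principal Cs) := by
        rw [Filter.mem_map]
        exact Filter.mem_of_superset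
          (Filter.inter_mem_inf (hU.mem_nhds hxU) (Filter.mem_principal_self _))
          (subset_preimage_image f _)
      have hnb : Iio (m - δ) ∈ 𝓝 r₁ := Iio_mem_nhds (by rw [hm, hd]; linarith)
      obtain ⟨v, hv1, hv2⟩ := clusterPt_iff_nonempty.1 h₁ hnb himg
      rcases hv2 with ⟨y, ⟨hyU, hyC⟩, rfl⟩
      refine ⟨y, hyU, ?_⟩
      exact mem_interior_iff_mem_nhds.2 ((hyC : ContinuousAt f y) (Iio_mem_nhds hv1))
    · -- x ∈ closure O₂
      rw [mem_closure_iff]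
      intro U hU hxU
      have himg : f '' (U ∩ Cs) ∈ Filter.map f (𝓝 x ⊓ Filter.principal Cs) := by
        rw [Filter.mem_map]
        exact Filter.mem_of_superset
          (Filter.inter_mem_inf (hU.mem_nhds hxU) (Filter.mem_principal_self _))
          (subset_preimage_image f _)
      have hnb : Ioi (m + δ) ∈ 𝓝 r₂ := Ioi_mem_nhds (by rw [hm, hd]; linarith)
      obtain ⟨v, hv1, hv2⟩ := clusterPt_iff_nonempty.1 h₂ hnb himg
      rcases hv2 with ⟨y, ⟨hyU, hyC⟩, rfl⟩
      refine ⟨y, hyU, ?_⟩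
      exact mem_interior_iff_mem_nhds.2 ((hyC : ContinuousAt f y) (Ioi_mem_nhds hv1))
    · -- disjoint closures of images
      have s1 : closure (f '' O₁) ⊆ Iic (m - δ) := by
        apply closure_minimal _ isClosed_Iic
        rintro _ ⟨z, hz, rfl⟩
        have hz' : z ∈ {w | f w < m - δ} := interior_subset hz
        simp only [mem_setOf_eq] at hz'
        exact le_of_lt hz'
      have s2 : closure (f '' O₂) ⊆ Ici (m + δ) := by
        apply closure_minimal _ isClosed_Ici
        rintro _ ⟨z, hz, rfl⟩
        have hz' : z ∈ {w | m + δ < f w} := interior_subset hz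
        simp only [mem_setOf_eq] at hz'
        exact le_of_lt hz'
      ext a
      simp only [mem_inter_iff, mem_empty_iff_false, iff_false]
      rintro ⟨ha1, ha2⟩
      have := s1 ha1
      have := s2 ha2
      simp only [mem_Iic, mem_Ici] at *
      linarith
  have huniq : ∀ (x : X) (r₁ r₂ : ℝ),
      MapClusterPt r₁ (𝓝 x ⊓ Filter.principal Cs) f →
      MapClusterPt r₂ (𝓝 x ⊓ Filter.principal Cs) f → r₁ = r₂ := by
    intro x r₁ r₂ h₁ h₂
    rcases lt_trichotomy r₁ r₂ with h | h | h
    · exact absurd (key x r₁ r₂ h h₁ h₂) not_false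
    · exact h
    · exact absurd (key x r₂ r₁ h h₂ h₁) not_false
  -- existence of limits
  have hlim : ∀ x : X, ∃ r : ℝ, Filter.Tendsto f (𝓝 x ⊓ Filter.principal Cs) (𝓝 r) := by
    intro x
    haveI := hNB x
    have hcpt : IsCompact (Icc (-C0) C0) := isCompact_Icc
    have hmem : ∀ᶠ z in 𝓝 x ⊓ Filter.principal Cs, f z ∈ Icc (-C0) C0 :=
      Filter.Eventually.of_forall fun z => ⟨(abs_le.1 (hC0 z)).1, (abs_le.1 (hC0 z)).2⟩
    obtain ⟨r, _, hr⟩ := hcpt.exists_clusterPt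
      (Filter.le_principal_iff.2 (Filter.mem_map.2 hmem))
    exact ⟨r, hcpt.tendsto_nhds_of_unique_mapClusterPt hmem fun y _ hy => huniq x y r hy hr⟩
  choose g hg using hlim
  have hgC : ∀ x, ContinuousAt f x → g x = f x := by
    intro x hx
    haveI := hNB x
    exact tendsto_nhds_unique (hg x) (hx.mono_left inf_le_left)
  have hgcont : Continuous g := by
    rw [continuous_iff_continuousAt]
    intro x
    rw [ContinuousAt, Metric.tendsto_nhds]
    intro ε hε
    have hball : f ⁻¹' Metric.ball (g x) (ε / 3) ∈ 𝓝 x ⊓ Filter.principal Cs :=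
      (hg x) (Metric.ball_mem_nhds _ (by linarith))
    rw [Filter.mem_inf_iff] at hball
    obtain ⟨t₁, ht₁, t₂, ht₂, heq⟩ := hball
    have hsub : interior t₁ ∩ Cs ⊆ f ⁻¹' Metric.ball (g x) (ε / 3) := by
      intro z hz
      rw [heq]
      exact ⟨interior_subset hz.1, Filter.mem_principal.1 ht₂ hz.2⟩
    filter_upwards [isOpen_interior.mem_nhds (mem_interior_iff_mem_nhds.2 ht₁)] with z hz
    haveI := hNB z
    have hmem' : interior t₁ ∩ Cs ∈ 𝓝 z ⊓ Filter.principal Cs :=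
      Filter.inter_mem_inf (isOpen_interior.mem_nhds hz) (Filter.mem_principal_self _)
    have hcl : g z ∈ closure (f '' (interior t₁ ∩ Cs)) :=
      mem_closure_of_tendsto (hg z)
        (Filter.eventually_of_mem hmem' fun w hw => mem_image_of_mem f hw)
    have hcl2 : g z ∈ Metric.closedBall (g x) (ε / 3) := by
      refine closure_minimal ?_ Metric.isClosed_closedBall hcl
      rintro _ ⟨w, hw, rfl⟩
      exact Metric.ball_subset_closedBall (hsub hw)
    have := Metric.mem_closedBall.1 hcl2
    calc dist (g z) (g x) ≤ ε / 3 := this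
      _ < ε := by linarith
  refine ⟨⟨g, hgcont⟩, fun x hx => hgC x hx, ?_⟩
  intro h hh
  ext x
  have : (h : X → ℝ) = g :=
    Continuous.ext_on hdense h.continuous hgcont fun y hy => (hh y hy).trans (hgC y hy).symm
  exact congrFun this x
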